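/- arXiv:2309.13493 — 2 statements merged into one kernel-verified Lean document; each statement's English description precedes it below -/
import Mathlib

section
/- For every integer k ≥ 2 and every real λ with 0 < λ < 2/(k+1), the Poisson distribution of order k with parameter λ has unique mode 0; that is, f_k(n;λ) < f_k(0;λ) for every integer n ≥ 1. -/
/-- Scaled pmf of the Poisson distribution of order `k`:
`h_k(n;λ) = Σ λ^(n₁+⋯+n_k)/(n₁!⋯n_k!)`, summed over all `k`-tuples `(n₁,…,n_k)`
of nonnegative integers with `n₁ + 2n₂ + ⋯ + k·n_k = n`.
(Each `n_i` is at most `n` whenever the constraint holds, so the range is exhaustive.) -/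
noncomputable def poissonOrderH (k n : ℕ) (lam : ℝ) : ℝ :=
  ∑ t ∈ (Fintype.piFinset fun _ : Fin k => Finset.range (n + 1)) |>.filter
      (fun t => ∑ i : Fin k, ((i : ℕ) + 1) * t i = n),
    lam ^ (∑ i : Fin k, t i) / ∏ i : Fin k, (Nat.factorial (t i) : ℝ)

/-- Pmf of the Poisson distribution of order `k`: `f_k(n;λ) = e^{-kλ} h_k(n;λ)`. -/
noncomputable def poissonOrderPmf (k n : ℕ) (lam : ℝ) : ℝ :=
  Real.exp (-(k * lam)) * poissonOrderH k n lam

open Finset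

-- box independence
lemma H_box (k n N : ℕ) (hn : n ≤ N) (lam : ℝ) :
    poissonOrderH k n lam =
    ∑ t ∈ (Fintype.piFinset fun _ : Fin k => Finset.range (N + 1)) |>.filter
        (fun t => ∑ i : Fin k, ((i : ℕ) + 1) * t i = n),
      lam ^ (∑ i : Fin k, t i) / ∏ i : Fin k, (Nat.factorial (t i) : ℝ) := by
  apply Finset.sum_congr ?_ (fun _ _ => rfl)
  ext t
  simp only [mem_filter, Fintype.mem_piFinset, mem_range]
  constructor
  · rintro ⟨h1, h2⟩
    exact ⟨fun i => lt_of_lt_of_le (h1 i) (by omega), h2⟩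
  · rintro ⟨h1, h2⟩
    refine ⟨fun i => ?_, h2⟩
    have h3 : ((i : ℕ) + 1) * t i ≤ n := by
      rw [← h2]
      exact Finset.single_le_sum (f := fun j : Fin k => ((j : ℕ) + 1) * t j)
        (fun _ _ => Nat.zero_le _) (mem_univ i)
    have : t i ≤ ((i : ℕ) + 1) * t i := Nat.le_mul_of_pos_left _ (Nat.succ_pos _)
    omega

lemma H_zero (k : ℕ) (lam : ℝ) : poissonOrderH k 0 lam = 1 := by
  unfold poissonOrderH
  have : ((Fintype.piFinset fun _ : Fin k => Finset.range (0 + 1)) |>.filter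
      (fun t => ∑ i : Fin k, ((i : ℕ) + 1) * t i = 0)) = {fun _ => 0} := by
    ext t
    simp only [mem_filter, Fintype.mem_piFinset, mem_range, mem_singleton]
    constructor
    · rintro ⟨h1, -⟩
      funext i; have := h1 i; omega
    · rintro rfl
      simp
  rw [this]
  simp

lemma H_nonneg (k n : ℕ) (lam : ℝ) (hlam : 0 ≤ lam) : 0 ≤ poissonOrderH k n lam := by
  apply Finset.sum_nonneg
  intro t _
  apply div_nonneg (pow_nonneg hlam _)
  exact Finset.prod_nonneg fun i _ => Nat.cast_nonneg _

-- composition of update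
lemma update_comp_eq {k : ℕ} {M : Type*} (t : Fin k → ℕ) (i : Fin k) (b : ℕ) (g : Fin k → ℕ → M) :
    (fun j => g j (Function.update t i b j)) = Function.update (fun j => g j (t j)) i (g i b) := by
  funext j
  by_cases h : j = i
  · subst h; simp
  · simp [Function.update_of_ne h]

lemma sum_update_comp {k : ℕ} (t : Fin k → ℕ) (i : Fin k) (b : ℕ) (g : Fin k → ℕ → ℕ) :
    ∑ j : Fin k, g j (Function.update t i b j) = g i b + ∑ j ∈ univ \ {i}, g j (t j) := by
  have := Finset.sum_update_of_mem (mem_univ i) (fun j => g j (t j)) (g i b)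
  rw [← this]
  exact Finset.sum_congr rfl fun j _ => by rw [congrFun (update_comp_eq t i b g) j]

lemma prod_update_comp {k : ℕ} (t : Fin k → ℕ) (i : Fin k) (b : ℕ) (g : Fin k → ℕ → ℕ) :
    ∏ j : Fin k, g j (Function.update t i b j) = g i b * ∏ j ∈ univ \ {i}, g j (t j) := by
  have := Finset.prod_update_of_mem (mem_univ i) (fun j => g j (t j)) (g i b)
  rw [← this]
  exact Finset.prod_congr rfl fun j _ => by rw [congrFun (update_comp_eq t i b g) j]

lemma sum_split {k : ℕ} (t : Fin k → ℕ) (i : Fin k) (g : Fin k → ℕ → ℕ) :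
    ∑ j : Fin k, g j (t j) = g i (t i) + ∑ j ∈ univ \ {i}, g j (t j) := by
  have := Finset.sum_update_of_mem (mem_univ i) (fun j => g j (t j)) (g i (t i))
  rw [← this]
  exact Finset.sum_congr rfl fun j _ => by
    by_cases h : j = i
    · subst h; simp
    · simp [Function.update_of_ne h]

lemma prod_split {k : ℕ} (t : Fin k → ℕ) (i : Fin k) (g : Fin k → ℕ → ℕ) :
    ∏ j : Fin k, g j (t j) = g i (t i) * ∏ j ∈ univ \ {i}, g j (t j) := by
  have := Finset.prod_update_of_mem (mem_univ i) (fun j => g j (t j)) (g i (t i))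
  rw [← this]
  exact Finset.prod_congr rfl fun j _ => by
    by_cases h : j = i
    · subst h; simp
    · simp [Function.update_of_ne h]

lemma H_rec (k : ℕ) (lam : ℝ) (n : ℕ) (hn : 1 ≤ n) :
    (n : ℝ) * poissonOrderH k n lam =
      lam * ∑ i : Fin k,
        (if (i : ℕ) + 1 ≤ n then (((i : ℕ) : ℝ) + 1) * poissonOrderH k (n - ((i : ℕ) + 1)) lam else 0) := by
  classical
  set F := (Fintype.piFinset fun _ : Fin k => Finset.range (n + 1)) |>.filter
      (fun t => ∑ i : Fin k, ((i : ℕ) + 1) * t i = n) with hF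
  have key : ∀ i : Fin k,
      (∑ t ∈ F, ((((i : ℕ) : ℝ) + 1) * (t i : ℝ)) *
          (lam ^ (∑ j : Fin k, t j) / ∏ j : Fin k, (Nat.factorial (t j) : ℝ)))
      = if (i : ℕ) + 1 ≤ n then
          lam * ((((i : ℕ) : ℝ) + 1) * poissonOrderH k (n - ((i : ℕ) + 1)) lam) else 0 := by
    intro i
    have hres : ∑ t ∈ F.filter (fun t => t i ≠ 0),
        ((((i : ℕ) : ℝ) + 1) * (t i : ℝ)) *
          (lam ^ (∑ j : Fin k, t j) / ∏ j : Fin k, (Nat.factorial (t j) : ℝ))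
        = ∑ t ∈ F, ((((i : ℕ) : ℝ) + 1) * (t i : ℝ)) *
          (lam ^ (∑ j : Fin k, t j) / ∏ j : Fin k, (Nat.factorial (t j) : ℝ)) := by
      apply Finset.sum_filter_of_ne
      intro t _ hne h0
      rw [h0] at hne
      simp at hne
    rw [← hres]
    by_cases hle : (i : ℕ) + 1 ≤ n
    · rw [if_pos hle]
      rw [H_box k (n - ((i : ℕ) + 1)) n (by omega) lam, Finset.mul_sum, Finset.mul_sum]
      refine Finset.sum_bij' (fun t _ => Function.update t i (t i - 1))
        (fun u _ => Function.update u i (u i + 1)) ?_ ?_ ?_ ?_ ?_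
      · -- hi
        intro t ht
        simp only [hF, mem_filter, Fintype.mem_piFinset, mem_range] at ht ⊢
        obtain ⟨⟨hbox, hcon⟩, hne⟩ := ht
        constructor
        · intro j
          by_cases hj : j = i
          · subst hj; simp only [Function.update_self]
            have := hbox j; omega
          · rw [Function.update_of_ne hj]; exact hbox j
        · rw [sum_update_comp t i (t i - 1) (fun j m => ((j : ℕ) + 1) * m)]
          rw [sum_split t i (fun j m => ((j : ℕ) + 1) * m)] at hcon
          have hmul : ((i : ℕ) + 1) * (t i) = ((i : ℕ) + 1) * (t i - 1) + ((i : ℕ) + 1) := by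
            conv_lhs => rw [show t i = (t i - 1) + 1 by omega]
            ring
          omega
      · -- hj
        intro u hu
        simp only [hF, mem_filter, Fintype.mem_piFinset, mem_range] at hu ⊢
        obtain ⟨hbox, hcon⟩ := hu
        have hui : ((i : ℕ) + 1) * u i ≤ n - ((i : ℕ) + 1) := by
          rw [← hcon]
          exact Finset.single_le_sum (f := fun j : Fin k => ((j : ℕ) + 1) * u j)
            (fun _ _ => Nat.zero_le _) (mem_univ i)
        have hui2 : u i ≤ ((i : ℕ) + 1) * u i := Nat.le_mul_of_pos_left _ (Nat.succ_pos _)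
        refine ⟨⟨fun j => ?_, ?_⟩, ?_⟩
        · by_cases hj : j = i
          · subst hj; simp only [Function.update_self]; omega
          · rw [Function.update_of_ne hj]; exact hbox j
        · rw [sum_update_comp u i (u i + 1) (fun j m => ((j : ℕ) + 1) * m)]
          rw [sum_split u i (fun j m => ((j : ℕ) + 1) * m)] at hcon
          have hmul : ((i : ℕ) + 1) * (u i + 1) = ((i : ℕ) + 1) * u i + ((i : ℕ) + 1) := by ring
          omega
        · simp only [Function.update_self]; omega
      · -- left
        intro t ht
        simp only [hF, mem_filter] at ht
        have hne : t i ≠ 0 := ht.2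
        funext j
        by_cases hj : j = i
        · subst hj
          simp only [Function.update_idem, Function.update_self]
          rw [show t j - 1 + 1 = t j by omega]
        · simp only [Function.update_idem]
          rw [Function.update_of_ne hj]
      · -- right
        intro u _
        funext j
        by_cases hj : j = i
        · subst hj
          simp only [Function.update_idem, Function.update_self]
          rw [show u j + 1 - 1 = u j by omega]
        · simp only [Function.update_idem]
          rw [Function.update_of_ne hj]
      · -- h
        intro t ht
        simp only [hF, mem_filter] at ht
        have hne : t i ≠ 0 := ht.2
        have hsum : ∑ j : Fin k, t j = (∑ j : Fin k, Function.update t i (t i - 1) j) + 1 := by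
          rw [sum_update_comp t i (t i - 1) (fun _ m => m),
            sum_split t i (fun _ m => m)]
          omega
        have hprod : ∏ j : Fin k, Nat.factorial (t j)
            = t i * ∏ j : Fin k, Nat.factorial (Function.update t i (t i - 1) j) := by
          rw [prod_update_comp t i (t i - 1) (fun _ m => Nat.factorial m),
            prod_split t i (fun _ m => Nat.factorial m)]
          have hfac : Nat.factorial (t i) = t i * Nat.factorial (t i - 1) := by
            conv_lhs => rw [show t i = (t i - 1) + 1 by omega]
            rw [Nat.factorial_succ]
            congr 1
            omega
          rw [hfac]; ring
        have hP : (0 : ℝ) < ∏ j : Fin k, (Nat.factorial (Function.update t i (t i - 1) j) : ℝ) := by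
          apply Finset.prod_pos
          intro j _
          exact_mod_cast Nat.factorial_pos _
        have hti : (0 : ℝ) < (t i : ℝ) := by exact_mod_cast Nat.pos_of_ne_zero hne
        have hprodR : (∏ j : Fin k, (Nat.factorial (t j) : ℝ))
            = (t i : ℝ) * ∏ j : Fin k, (Nat.factorial (Function.update t i (t i - 1) j) : ℝ) := by
          rw [← Nat.cast_prod, hprod]
          push_cast
          ring
        rw [hsum, hprodR]
        field_simp
        ring
    · rw [if_neg hle]
      apply Finset.sum_eq_zero
      intro t ht
      simp only [hF, mem_filter, Fintype.mem_piFinset, mem_range] at ht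
      obtain ⟨⟨hbox, hcon⟩, hne⟩ := ht
      exfalso
      apply hle
      calc (i : ℕ) + 1 ≤ ((i : ℕ) + 1) * t i :=
            Nat.le_mul_of_pos_right _ (Nat.pos_of_ne_zero hne)
        _ ≤ n := by
            rw [← hcon]
            exact Finset.single_le_sum (f := fun j : Fin k => ((j : ℕ) + 1) * t j)
              (fun _ _ => Nat.zero_le _) (mem_univ i)
  -- assemble
  have hH : poissonOrderH k n lam
      = ∑ t ∈ F, lam ^ (∑ j : Fin k, t j) / ∏ j : Fin k, (Nat.factorial (t j) : ℝ) := rfl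
  rw [hH, Finset.mul_sum]
  have lhs_eq : ∑ t ∈ F, (n : ℝ) *
      (lam ^ (∑ j : Fin k, t j) / ∏ j : Fin k, (Nat.factorial (t j) : ℝ))
      = ∑ i : Fin k, ∑ t ∈ F, ((((i : ℕ) : ℝ) + 1) * (t i : ℝ)) *
          (lam ^ (∑ j : Fin k, t j) / ∏ j : Fin k, (Nat.factorial (t j) : ℝ)) := by
    rw [Finset.sum_comm]
    apply Finset.sum_congr rfl
    intro t ht
    simp only [hF, mem_filter] at ht
    have hcon := ht.2
    have hcast : (n : ℝ) = ∑ i : Fin k, (((i : ℕ) : ℝ) + 1) * (t i : ℝ) := by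
      rw [← hcon]
      push_cast
      exact Finset.sum_congr rfl fun x _ => by ring
    rw [hcast, Finset.sum_mul]
  rw [lhs_eq, Finset.mul_sum]
  apply Finset.sum_congr rfl
  intro i _
  rw [key i]
  by_cases hle : (i : ℕ) + 1 ≤ n
  · rw [if_pos hle, if_pos hle]
  · rw [if_neg hle, if_neg hle]; ring

lemma gauss_nat (k n : ℕ) :
    (∑ i ∈ Finset.range k, if i + 1 ≤ n then i + 1 else 0) * 2 = min k n * (min k n + 1) := by
  induction k with
  | zero => simp
  | succ k ih =>
    rw [Finset.sum_range_succ, Nat.add_mul, ih]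
    by_cases h : k + 1 ≤ n
    · rw [if_pos h, Nat.min_eq_left h, Nat.min_eq_left (by omega)]
      ring
    · rw [if_neg h, Nat.min_eq_right (by omega), Nat.min_eq_right (by omega)]
      simp

lemma min_mul_le (k n : ℕ) (hk : 1 ≤ k) (hn : 1 ≤ n) :
    min k n * (min k n + 1) ≤ n * (k + 1) := by
  rcases le_total k n with h | h
  · rw [Nat.min_eq_left h]
    exact Nat.mul_le_mul h (le_refl _)
  · rw [Nat.min_eq_right h]
    exact Nat.mul_le_mul (le_refl _) (by omega)

lemma H_lt_one (k : ℕ) (hk : 2 ≤ k) (lam : ℝ) (hlam : 0 < lam)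
    (hlam2 : lam < 2 / ((k : ℝ) + 1)) :
    ∀ n : ℕ, 1 ≤ n → poissonOrderH k n lam < 1 := by
  intro n
  induction n using Nat.strong_induction_on with
  | _ n ih =>
    intro hn
    have key := H_rec k lam n hn
    set S := ∑ i : Fin k,
        (if (i : ℕ) + 1 ≤ n then (((i : ℕ) : ℝ) + 1) * poissonOrderH k (n - ((i : ℕ) + 1)) lam else 0)
      with hS
    set G := ∑ i : Fin k, (if (i : ℕ) + 1 ≤ n then (((i : ℕ) : ℝ) + 1) else 0) with hG
    have hSG : S ≤ G := by
      apply Finset.sum_le_sum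
      intro i _
      by_cases hle : (i : ℕ) + 1 ≤ n
      · rw [if_pos hle, if_pos hle]
        have hHle : poissonOrderH k (n - ((i : ℕ) + 1)) lam ≤ 1 := by
          rcases Nat.eq_zero_or_pos (n - ((i : ℕ) + 1)) with h0 | h1
          · rw [h0, H_zero]
          · exact le_of_lt (ih _ (by omega) h1)
        calc (((i : ℕ) : ℝ) + 1) * poissonOrderH k (n - ((i : ℕ) + 1)) lam
            ≤ (((i : ℕ) : ℝ) + 1) * 1 :=
              mul_le_mul_of_nonneg_left hHle (by positivity)
          _ = ((i : ℕ) : ℝ) + 1 := mul_one _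
      · rw [if_neg hle, if_neg hle]
    -- G as a rational number
    have hGval : G = ((min k n * (min k n + 1) : ℕ) : ℝ) / 2 := by
      have h1 : G = ((∑ i ∈ Finset.range k, if i + 1 ≤ n then i + 1 else 0 : ℕ) : ℝ) := by
        rw [hG, Fin.sum_univ_eq_sum_range (fun i => if i + 1 ≤ n then ((i : ℝ) + 1) else 0) k]
        rw [Nat.cast_sum]
        apply Finset.sum_congr rfl
        intro i _
        by_cases hle : i + 1 ≤ n
        · rw [if_pos hle, if_pos hle]; push_cast; ring
        · rw [if_neg hle, if_neg hle]; simp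
      rw [h1, ← gauss_nat k n]
      push_cast
      ring
    have hmin1 : 1 ≤ min k n := le_min (by omega) hn
    have hGpos : 0 < G := by
      rw [hGval]
      have : (2 : ℕ) ≤ min k n * (min k n + 1) := by nlinarith
      have : (2 : ℝ) ≤ ((min k n * (min k n + 1) : ℕ) : ℝ) := by exact_mod_cast this
      linarith
    have hk1 : (0 : ℝ) < (k : ℝ) + 1 := by positivity
    have hmn : ((min k n * (min k n + 1) : ℕ) : ℝ) ≤ (n : ℝ) * ((k : ℝ) + 1) := by
      have := min_mul_le k n (by omega) hn
      exact_mod_cast this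
    have hfinal : (2 / ((k : ℝ) + 1)) * G ≤ (n : ℝ) := by
      rw [hGval, div_mul_eq_mul_div, div_le_iff₀ hk1]
      linarith [hmn]
    have hchain : (n : ℝ) * poissonOrderH k n lam < (n : ℝ) := by
      calc (n : ℝ) * poissonOrderH k n lam = lam * S := key
        _ ≤ lam * G := mul_le_mul_of_nonneg_left hSG (le_of_lt hlam)
        _ < (2 / ((k : ℝ) + 1)) * G := mul_lt_mul_of_pos_right hlam2 hGpos
        _ ≤ (n : ℝ) := hfinal
    have hnpos : (0 : ℝ) < (n : ℝ) := by exact_mod_cast hn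
    nlinarith


theorem stmt_8 (k : ℕ) (hk : 2 ≤ k) (lam : ℝ) (hlam : 0 < lam)
    (hlam2 : lam < 2 / ((k : ℝ) + 1)) :
    ∀ n : ℕ, 1 ≤ n → poissonOrderPmf k n lam < poissonOrderPmf k 0 lam := by
  intro n hn
  unfold poissonOrderPmf
  rw [H_zero]
  have h1 := H_lt_one k hk lam hlam hlam2 n hn
  have hexp : 0 < Real.exp (-(k * lam)) := Real.exp_pos _
  nlinarith
end

section
/- For every integer k ≥ 1 and every real λ > 0, the variance of the Poisson distribution of order k with parameter λ equals k(k+1)(2k+1)λ/6: the series Σ_{n=0}^{∞} n²·f_k(n;λ) converges and Σ_{n=0}^{∞} n²·f_k(n;λ) − (k(k+1)λ/2)² = k(k+1)(2k+1)λ/6. -/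
/- ### Auxiliary lemmas -/

open Finset in
lemma aux_m0 (lam : ℝ) :
    HasSum (fun n : ℕ => lam ^ n / (Nat.factorial n : ℝ)) (Real.exp lam) := by
  rw [Real.exp_eq_exp_ℝ]
  exact NormedSpace.expSeries_div_hasSum_exp lam

lemma aux_m1 (lam : ℝ) :
    HasSum (fun n : ℕ => (n : ℝ) * (lam ^ n / (Nat.factorial n : ℝ)))
      (lam * Real.exp lam) := by
  rw [← hasSum_nat_add_iff' 1]
  simp only [Finset.sum_range_one, Nat.cast_zero, zero_mul, sub_zero]
  exact ((aux_m0 lam).mul_left lam).congr_fun fun n => by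
    have hf : ((Nat.factorial (n + 1) : ℝ)) = ((n : ℝ) + 1) * (Nat.factorial n : ℝ) := by
      rw [Nat.factorial_succ]; push_cast; ring
    have h1 : (Nat.factorial n : ℝ) ≠ 0 := Nat.cast_ne_zero.mpr (Nat.factorial_ne_zero n)
    have h2 : ((n : ℝ) + 1) ≠ 0 := by positivity
    rw [pow_succ, hf]; push_cast; field_simp

lemma aux_m2' (lam : ℝ) :
    HasSum (fun n : ℕ => (n : ℝ) * ((n : ℝ) - 1) * (lam ^ n / (Nat.factorial n : ℝ)))
      (lam ^ 2 * Real.exp lam) := by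
  rw [← hasSum_nat_add_iff' 2]
  simp only [Finset.sum_range_succ, Finset.sum_range_zero, Nat.cast_zero, Nat.cast_one,
    zero_mul, sub_self, mul_zero, zero_add, add_zero, sub_zero]
  exact ((aux_m0 lam).mul_left (lam ^ 2)).congr_fun fun n => by
    have hf : ((Nat.factorial (n + 2) : ℝ))
        = ((n : ℝ) + 2) * (((n : ℝ) + 1) * (Nat.factorial n : ℝ)) := by
      rw [Nat.factorial_succ, Nat.factorial_succ]; push_cast; ring
    have h1 : (Nat.factorial n : ℝ) ≠ 0 := Nat.cast_ne_zero.mpr (Nat.factorial_ne_zero n)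
    have h2 : ((n : ℝ) + 1) ≠ 0 := by positivity
    have h3 : ((n : ℝ) + 2) ≠ 0 := by positivity
    rw [hf]; push_cast; field_simp; ring

lemma aux_m2 (lam : ℝ) :
    HasSum (fun n : ℕ => (n : ℝ) ^ 2 * (lam ^ n / (Nat.factorial n : ℝ)))
      ((lam ^ 2 + lam) * Real.exp lam) := by
  have h := (aux_m2' lam).add (aux_m1 lam)
  have key : (fun n : ℕ => (n : ℝ) * ((n : ℝ) - 1) * (lam ^ n / (Nat.factorial n : ℝ))
      + (n : ℝ) * (lam ^ n / (Nat.factorial n : ℝ)))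
      = fun n : ℕ => (n : ℝ) ^ 2 * (lam ^ n / (Nat.factorial n : ℝ)) := by
    funext n; ring
  rw [key] at h
  convert h using 1
  ring

/-- Normalized moment values: `N c = E[X^c] / e^λ` for `X ~ Poisson(λ)`, `c ≤ 2`. -/
noncomputable def momN (lam : ℝ) : ℕ → ℝ
  | 0 => 1
  | 1 => lam
  | _ => lam ^ 2 + lam

lemma aux_mom (lam : ℝ) {c : ℕ} (hc : c ≤ 2) :
    HasSum (fun n : ℕ => (n : ℝ) ^ c * (lam ^ n / (Nat.factorial n : ℝ)))
      (momN lam c * Real.exp lam) := by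
  interval_cases c
  · simpa [momN] using aux_m0 lam
  · simpa [momN] using aux_m1 lam
  · simpa [momN] using aux_m2 lam

set_option maxHeartbeats 1000000 in
/-- Product of `k` summable families of nonnegative reals, indexed by `Fin k → ℕ`. -/
lemma aux_pi {k : ℕ} (f : Fin k → ℕ → ℝ) (a : Fin k → ℝ)
    (h0 : ∀ i x, 0 ≤ f i x) (h : ∀ i, HasSum (f i) (a i)) :
    HasSum (fun t : Fin k → ℕ => ∏ i, f i (t i)) (∏ i, a i) := by
  induction k with
  | zero =>
    simpa using hasSum_unique (fun _ : Fin 0 → ℕ => (1 : ℝ))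
  | succ k ih =>
    have h1 := h 0
    have h2 := ih (fun i => f i.succ) (fun i => a i.succ)
      (fun i x => h0 _ _) (fun i => h i.succ)
    have hf' : 0 ≤ f 0 := fun x => h0 0 x
    have hg' : 0 ≤ (fun t : Fin k → ℕ => ∏ i, f i.succ (t i)) :=
      fun t => Finset.prod_nonneg fun i _ => h0 _ _
    have hsummable : Summable (fun p : ℕ × (Fin k → ℕ) =>
        f 0 p.1 * ∏ i, f i.succ (p.2 i)) := by
      apply Summable.mul_of_nonneg h1.summable h2.summable hf' hg'
    have hmul := h1.mul h2 hsummable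
    rw [← (Fin.consEquiv fun _ : Fin (k + 1) => ℕ).hasSum_iff]
    have key : ((fun t : Fin (k + 1) → ℕ => ∏ i, f i (t i)) ∘
        (Fin.consEquiv fun _ : Fin (k + 1) => ℕ))
        = fun p : ℕ × (Fin k → ℕ) => f 0 p.1 * ∏ i, f i.succ (p.2 i) := by
      funext p
      simp [Fin.consEquiv, Fin.prod_univ_succ]
    rw [key, Fin.prod_univ_succ]
    exact hmul

lemma aux_sumP1 (k : ℕ) : ∑ i : Fin k, ((i : ℝ) + 1) = (k : ℝ) * ((k : ℝ) + 1) / 2 := by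
  induction k with
  | zero => simp
  | succ k ih =>
    rw [Fin.sum_univ_castSucc]
    simp only [Fin.coe_castSucc, Fin.val_last]
    push_cast
    rw [ih]
    ring

lemma aux_sumP2 (k : ℕ) :
    ∑ i : Fin k, ((i : ℝ) + 1) ^ 2 = (k : ℝ) * ((k : ℝ) + 1) * (2 * (k : ℝ) + 1) / 6 := by
  induction k with
  | zero => simp
  | succ k ih =>
    rw [Fin.sum_univ_castSucc]
    simp only [Fin.coe_castSucc, Fin.val_last]
    push_cast
    rw [ih]
    ring

set_option maxHeartbeats 1000000 in
theorem stmt_13 (k : ℕ) (hk : 1 ≤ k) (lam : ℝ) (hlam : 0 < lam) :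
    ∃ S : ℝ, HasSum (fun n : ℕ => (n : ℝ) ^ 2 * poissonOrderPmf k n lam) S ∧
      S - ((k : ℝ) * ((k : ℝ) + 1) * lam / 2) ^ 2
        = (k : ℝ) * ((k : ℝ) + 1) * (2 * (k : ℝ) + 1) * lam / 6 := by
  classical
  -- weight function
  set w : (Fin k → ℕ) → ℕ := fun t => ∑ i : Fin k, ((i : ℕ) + 1) * t i with hw
  -- the global summand
  set G : (Fin k → ℕ) → ℝ := fun t =>
    ((w t : ℕ) : ℝ) ^ 2 * (lam ^ (∑ i : Fin k, t i) / ∏ i : Fin k, (Nat.factorial (t i) : ℝ))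
    with hG
  -- pairwise exponents
  set c : (Fin k × Fin k) → Fin k → ℕ := fun p m =>
    (if m = p.1 then 1 else 0) + (if m = p.2 then 1 else 0) with hc
  have hc2 : ∀ p m, c p m ≤ 2 := by
    intro p m; dsimp [c]; split <;> split <;> norm_num
  -- per-pair summand
  set term : (Fin k × Fin k) → (Fin k → ℕ) → ℝ := fun p t =>
    (((p.1 : ℕ) : ℝ) + 1) * (((p.2 : ℕ) : ℝ) + 1) *
      ∏ m : Fin k, ((t m : ℝ) ^ (c p m) * (lam ^ (t m) / (Nat.factorial (t m) : ℝ)))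
    with hterm
  -- each per-pair family has a sum
  have hterm_sum : ∀ p : Fin k × Fin k,
      HasSum (term p) ((((p.1 : ℕ) : ℝ) + 1) * (((p.2 : ℕ) : ℝ) + 1) *
        ∏ m : Fin k, (momN lam (c p m) * Real.exp lam)) := by
    intro p
    exact (aux_pi (fun m x => (x : ℝ) ^ (c p m) * (lam ^ x / (Nat.factorial x : ℝ)))
      (fun m => momN lam (c p m) * Real.exp lam)
      (fun m x => by positivity)
      (fun m => aux_mom lam (hc2 p m))).mul_left _
  -- pointwise identity : G = ∑ over pairs of term
  have hpoint : ∀ t : Fin k → ℕ, G t = ∑ p : Fin k × Fin k, term p t := by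
    intro t
    have hprod : ∀ p : Fin k × Fin k,
        (∏ m : Fin k, ((t m : ℝ) ^ (c p m) * (lam ^ (t m) / (Nat.factorial (t m) : ℝ))))
        = ((t p.1 : ℝ) * (t p.2 : ℝ)) *
            (lam ^ (∑ i : Fin k, t i) / ∏ i : Fin k, (Nat.factorial (t i) : ℝ)) := by
      intro p
      rw [Finset.prod_mul_distrib]
      congr 1
      · dsimp [c]
        simp only [pow_add]
        rw [Finset.prod_mul_distrib]
        congr 1
        · rw [show (fun m => (t m : ℝ) ^ (if m = p.1 then 1 else 0)) =
              (fun m => if m = p.1 then (t m : ℝ) else 1) from by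
            funext m; split <;> simp]
          simp [Finset.prod_ite_eq']
        · rw [show (fun m => (t m : ℝ) ^ (if m = p.2 then 1 else 0)) =
              (fun m => if m = p.2 then (t m : ℝ) else 1) from by
            funext m; split <;> simp]
          simp [Finset.prod_ite_eq']
      · rw [Finset.prod_div_distrib, Finset.prod_pow_eq_pow_sum]
    have hwcast : ((w t : ℕ) : ℝ) = ∑ i : Fin k, (((i : ℕ) : ℝ) + 1) * (t i : ℝ) := by
      rw [hw]; push_cast
      exact Finset.sum_congr rfl fun i _ => by ring
    calc G t = ((w t : ℕ) : ℝ) ^ 2 * (lam ^ (∑ i : Fin k, t i) /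
          ∏ i : Fin k, (Nat.factorial (t i) : ℝ)) := rfl
      _ = ∑ p : Fin k × Fin k, term p t := by
          simp only [hterm, hprod]
          rw [hwcast, sq, Finset.sum_mul_sum, Fintype.sum_prod_type, Finset.sum_mul]
          refine Finset.sum_congr rfl fun i _ => ?_
          rw [Finset.sum_mul]
          refine Finset.sum_congr rfl fun j _ => ?_
          ring
  -- the total sum
  set S' : ℝ := ∑ p : Fin k × Fin k,
    ((((p.1 : ℕ) : ℝ) + 1) * (((p.2 : ℕ) : ℝ) + 1) *
      ∏ m : Fin k, (momN lam (c p m) * Real.exp lam)) with hS'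
  have hGsum : HasSum G S' := by
    have := hasSum_sum (s := (Finset.univ : Finset (Fin k × Fin k)))
      (f := term) (fun p _ => hterm_sum p)
    exact this.congr_fun fun t => hpoint t
  -- evaluate S'
  have hprodmom : ∀ p : Fin k × Fin k,
      (∏ m : Fin k, (momN lam (c p m) * Real.exp lam))
        = Real.exp (k * lam) * (lam ^ 2 + if p.1 = p.2 then lam else 0) := by
    intro p
    rw [Finset.prod_mul_distrib]
    have hek : (∏ _m : Fin k, Real.exp lam) = Real.exp (k * lam) := by
      rw [Finset.prod_const, Finset.card_univ, Fintype.card_fin, ← Real.exp_nat_mul]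
    rw [hek]
    rw [mul_comm]
    congr 1
    by_cases hpq : p.1 = p.2
    · have : ∀ m, momN lam (c p m) = if m = p.1 then lam ^ 2 + lam else 1 := by
        intro m; dsimp [c]; rw [← hpq]; split <;> simp [momN]
      simp only [this]
      rw [Finset.prod_ite_eq']
      simp [hpq]
    · have : ∀ m, momN lam (c p m) =
          (if m = p.1 then lam else 1) * (if m = p.2 then lam else 1) := by
        intro m; dsimp [c]
        by_cases h1 : m = p.1 <;> by_cases h2 : m = p.2 <;>
          simp_all [momN] <;> exact absurd (h1 ▸ h2) hpq
      simp only [this]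
      rw [Finset.prod_mul_distrib, Finset.prod_ite_eq', Finset.prod_ite_eq']
      simp [hpq, sq]
  have hS'val : S' = Real.exp (k * lam) *
      (lam ^ 2 * ((k : ℝ) * ((k : ℝ) + 1) / 2) ^ 2
        + lam * ((k : ℝ) * ((k : ℝ) + 1) * (2 * (k : ℝ) + 1) / 6)) := by
    rw [hS']
    simp only [hprodmom]
    rw [Fintype.sum_prod_type]
    have expand : ∀ i j : Fin k,
        (((i : ℕ) : ℝ) + 1) * (((j : ℕ) : ℝ) + 1) *
          (Real.exp (k * lam) * (lam ^ 2 + if i = j then lam else 0))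
        = Real.exp (k * lam) * lam ^ 2 * ((((i : ℕ) : ℝ) + 1) * (((j : ℕ) : ℝ) + 1))
          + Real.exp (k * lam) * lam *
            (if i = j then (((i : ℕ) : ℝ) + 1) * (((j : ℕ) : ℝ) + 1) else 0) := by
      intro i j
      by_cases h : i = j <;> simp only [h, if_pos, if_true, if_neg, if_false] <;> ring
    have split : ∑ i : Fin k, ∑ j : Fin k,
        ((((i : ℕ) : ℝ) + 1) * (((j : ℕ) : ℝ) + 1) *
          (Real.exp (k * lam) * (lam ^ 2 + if i = j then lam else 0)))
        = Real.exp (k * lam) * lam ^ 2 *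
            (∑ i : Fin k, ∑ j : Fin k, ((((i : ℕ) : ℝ) + 1) * (((j : ℕ) : ℝ) + 1)))
          + Real.exp (k * lam) * lam *
            (∑ i : Fin k, ∑ j : Fin k,
              (if i = j then (((i : ℕ) : ℝ) + 1) * (((j : ℕ) : ℝ) + 1) else 0)) := by
      rw [Finset.mul_sum, Finset.mul_sum, ← Finset.sum_add_distrib]
      refine Finset.sum_congr rfl fun i _ => ?_
      rw [Finset.mul_sum, Finset.mul_sum, ← Finset.sum_add_distrib]
      refine Finset.sum_congr rfl fun j _ => ?_
      exact expand i j
    rw [split]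
    have e1 : ∑ i : Fin k, ∑ j : Fin k, ((((i : ℕ) : ℝ) + 1) * (((j : ℕ) : ℝ) + 1))
        = ((k : ℝ) * ((k : ℝ) + 1) / 2) ^ 2 := by
      simp only [← Finset.mul_sum, ← Finset.sum_mul, aux_sumP1]
      ring
    have e2 : ∑ i : Fin k, ∑ j : Fin k,
        (if i = j then (((i : ℕ) : ℝ) + 1) * (((j : ℕ) : ℝ) + 1) else 0)
        = (k : ℝ) * ((k : ℝ) + 1) * (2 * (k : ℝ) + 1) / 6 := by
      have ediag : ∀ i : Fin k, ∑ j : Fin k,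
          (if i = j then (((i : ℕ) : ℝ) + 1) * (((j : ℕ) : ℝ) + 1) else 0)
          = (((i : ℕ) : ℝ) + 1) ^ 2 := by
        intro i
        rw [Finset.sum_ite_eq]
        simp [sq]
      simp only [ediag, aux_sumP2]
    rw [e1, e2]
    ring
  -- fiberwise : for each n the fiber sum is n^2 * poissonOrderH k n lam
  set F : ℕ → Finset (Fin k → ℕ) := fun n =>
    (Fintype.piFinset fun _ : Fin k => Finset.range (n + 1)) |>.filter
      (fun t => ∑ i : Fin k, ((i : ℕ) + 1) * t i = n) with hF
  have hmemF : ∀ n (t : Fin k → ℕ), t ∈ F n ↔ w t = n := by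
    intro n t
    rw [hF]
    simp only [Finset.mem_filter, Fintype.mem_piFinset, Finset.mem_range]
    constructor
    · rintro ⟨-, h⟩; exact h
    · intro h
      refine ⟨fun i => ?_, h⟩
      have h1 : ((i : ℕ) + 1) * t i ≤ w t :=
        Finset.single_le_sum (f := fun i : Fin k => ((i : ℕ) + 1) * t i)
          (fun _ _ => Nat.zero_le _) (Finset.mem_univ i)
      have h2 : t i ≤ ((i : ℕ) + 1) * t i := Nat.le_mul_of_pos_left _ (Nat.succ_pos _)
      omega
  have hfib : ∀ n : ℕ, HasSum (fun c : { t : Fin k → ℕ // w t = n } => G c.1)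
      ((n : ℝ) ^ 2 * poissonOrderH k n lam) := by
    intro n
    have hsum_eq : (∑ t ∈ F n, G t) = (n : ℝ) ^ 2 * poissonOrderH k n lam := by
      have hHdef : poissonOrderH k n lam
          = ∑ t ∈ F n, lam ^ (∑ i : Fin k, t i) / ∏ i : Fin k, (Nat.factorial (t i) : ℝ) :=
        rfl
      rw [hHdef, Finset.mul_sum]
      refine Finset.sum_congr rfl fun t ht => ?_
      have : w t = n := (hmemF n t).mp ht
      rw [hG]
      dsimp only
      rw [this]
    have h1 : HasSum (fun c : ↥(F n) => G c.1) (∑ t ∈ F n, G t) := by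
      have := hasSum_fintype (fun c : ↥(F n) => G c.1)
      rwa [Finset.sum_coe_sort (F n) G] at this
    rw [hsum_eq] at h1
    exact ((Equiv.subtypeEquivRight (fun t => hmemF n t)).hasSum_iff
      (f := fun c : { t : Fin k → ℕ // w t = n } => G c.1)).mp h1
  -- assemble via sigma decomposition
  have hsigma : HasSum (fun n : ℕ => (n : ℝ) ^ 2 * poissonOrderH k n lam) S' := by
    have he := ((Equiv.sigmaFiberEquiv w).hasSum_iff (f := G)).mpr hGsum
    exact HasSum.sigma he (fun n => hfib n)
  refine ⟨Real.exp (-(k * lam)) * S', ?_, ?_⟩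
  · have := hsigma.mul_left (Real.exp (-(k * lam)))
    refine this.congr_fun fun n => ?_
    rw [poissonOrderPmf]; ring
  · rw [hS'val, ← mul_assoc, ← Real.exp_add]
    simp only [neg_add_cancel, Real.exp_zero, one_mul]
    ring
end
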